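/- arXiv:2503.20038 — 2 statements merged into one kernel-verified Lean document; each statement's English description precedes it below -/
import Mathlib

section
/- Let η, G', g' be vectors in ℝ³ with g' ≠ 0, G' not collinear with g', and η · G' < 0. Set a = g' × (g' × G') and α = −2 (η · G')/(a · G'). Then the vector η' = η + α • a satisfies η' · g' = η · g' and η' · G' = −(η · G') > 0. -/
open Matrix

theorem stmt_1 (η G' g' : Fin 3 → ℝ) (hg : g' ≠ 0)
    (hnc : ¬ ∃ t : ℝ, G' = t • g') (hη : η ⬝ᵥ G' < 0) :
    let a : Fin 3 → ℝ := crossProduct g' (crossProduct g' G')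
    let α : ℝ := -2 * (η ⬝ᵥ G') / (a ⬝ᵥ G')
    let η' : Fin 3 → ℝ := η + α • a
    η' ⬝ᵥ g' = η ⬝ᵥ g' ∧ η' ⬝ᵥ G' = -(η ⬝ᵥ G') ∧ 0 < η' ⬝ᵥ G' := by
  intro a α η'
  set c : Fin 3 → ℝ := crossProduct g' G' with hcdef
  have hc : c ≠ 0 := by
    intro h
    have h0 := congrFun h 0
    have h1 := congrFun h 1
    have h2 := congrFun h 2
    simp [hcdef, crossProduct, Pi.zero_apply] at h0 h1 h2
    apply hnc
    have hgne : g' 0 ≠ 0 ∨ g' 1 ≠ 0 ∨ g' 2 ≠ 0 := by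
      by_contra hcon
      push_neg at hcon
      apply hg
      funext i
      fin_cases i <;> simp [hcon.1, hcon.2.1, hcon.2.2]
    rcases hgne with h | h | h
    · refine ⟨G' 0 / g' 0, funext fun i => ?_⟩
      have e0 : G' 0 = G' 0 / g' 0 * g' 0 := by field_simp
      have e1 : G' 1 = G' 0 / g' 0 * g' 1 := by field_simp; linarith
      have e2 : G' 2 = G' 0 / g' 0 * g' 2 := by field_simp; linarith
      fin_cases i
      · exact e0
      · exact e1
      · exact e2
    · refine ⟨G' 1 / g' 1, funext fun i => ?_⟩
      have e0 : G' 0 = G' 1 / g' 1 * g' 0 := by field_simp; linarith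
      have e1 : G' 1 = G' 1 / g' 1 * g' 1 := by field_simp
      have e2 : G' 2 = G' 1 / g' 1 * g' 2 := by field_simp; linarith
      fin_cases i
      · exact e0
      · exact e1
      · exact e2
    · refine ⟨G' 2 / g' 2, funext fun i => ?_⟩
      have e0 : G' 0 = G' 2 / g' 2 * g' 0 := by field_simp; linarith
      have e1 : G' 1 = G' 2 / g' 2 * g' 1 := by field_simp; linarith
      have e2 : G' 2 = G' 2 / g' 2 * g' 2 := by field_simp
      fin_cases i
      · exact e0
      · exact e1
      · exact e2
  have hcc : 0 < c ⬝ᵥ c := by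
    have hne : c ⬝ᵥ c ≠ 0 := by
      intro h
      exact hc ((dotProduct_self_eq_zero).mp h)
    have hnn : 0 ≤ c ⬝ᵥ c := by
      simp only [dotProduct, Fin.sum_univ_three]
      nlinarith [mul_self_nonneg (c 0), mul_self_nonneg (c 1), mul_self_nonneg (c 2)]
    exact lt_of_le_of_ne hnn (Ne.symm hne)
  have hag : a ⬝ᵥ g' = 0 := by
    show (crossProduct g' (crossProduct g' G')) ⬝ᵥ g' = 0
    simp [crossProduct, dotProduct, Fin.sum_univ_three]
    ring
  have hlag : a ⬝ᵥ G' = -(c ⬝ᵥ c) := by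
    show (crossProduct g' (crossProduct g' G')) ⬝ᵥ G' = _
    simp [hcdef, crossProduct, dotProduct, Fin.sum_univ_three]
    ring
  have hagne : a ⬝ᵥ G' ≠ 0 := by rw [hlag]; exact neg_ne_zero.mpr (ne_of_gt hcc)
  have hη'g : η' ⬝ᵥ g' = η ⬝ᵥ g' := by
    show (η + α • a) ⬝ᵥ g' = η ⬝ᵥ g'
    rw [add_dotProduct, smul_dotProduct, hag]
    simp
  have hη'G : η' ⬝ᵥ G' = -(η ⬝ᵥ G') := by
    show (η + α • a) ⬝ᵥ G' = -(η ⬝ᵥ G')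
    rw [add_dotProduct, smul_dotProduct, smul_eq_mul]
    have hα : α * (a ⬝ᵥ G') = -2 * (η ⬝ᵥ G') := by
      show -2 * (η ⬝ᵥ G') / (a ⬝ᵥ G') * (a ⬝ᵥ G') = _
      exact div_mul_cancel₀ _ hagne
    rw [hα]; ring
  exact ⟨hη'g, hη'G, by rw [hη'G]; linarith⟩
end

section
/- Let λ be a real number with 0 < λ² ≤ 1/8, and define ϖ² = (4λ² + 1 + √(1 − 8λ²))/(8λ²) or ϖ² = (4λ² + 1 − √(1 − 8λ²))/(8λ²). Then in both cases ϖ² ≥ 1 and λ² (2ϖ² − 1)² = ϖ² − 1, i.e., ϖ solves the stationary-phase equation √(ϖ² − 1)/(2ϖ² − 1) = |λ|. -/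
theorem stmt_10 (l s : ℝ) (hl : 0 < l ^ 2) (hl' : l ^ 2 ≤ 1 / 8)
    (hs : s = (4 * l ^ 2 + 1 + Real.sqrt (1 - 8 * l ^ 2)) / (8 * l ^ 2) ∨
          s = (4 * l ^ 2 + 1 - Real.sqrt (1 - 8 * l ^ 2)) / (8 * l ^ 2)) :
    1 ≤ s ∧ l ^ 2 * (2 * s - 1) ^ 2 = s - 1 ∧
      Real.sqrt (s - 1) / (2 * s - 1) = |l| := by
  have h8 : (0:ℝ) ≤ 1 - 8 * l ^ 2 := by nlinarith
  set r := Real.sqrt (1 - 8 * l ^ 2) with hrdef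
  have hr2 : r ^ 2 = 1 - 8 * l ^ 2 := Real.sq_sqrt h8
  have hr0 : 0 ≤ r := Real.sqrt_nonneg _
  have hl0 : (8 : ℝ) * l ^ 2 > 0 := by positivity
  have key : 1 ≤ s ∧ l ^ 2 * (2 * s - 1) ^ 2 = s - 1 := by
    rcases hs with h | h <;> subst h <;> constructor
    · rw [le_div_iff₀ hl0]; nlinarith
    · rw [mul_div_assoc', div_sub_one hl0.ne', div_sub_one hl0.ne', div_pow, mul_div_assoc', div_eq_div_iff (by positivity) hl0.ne']
      nlinarith [hr2, hl, sq_nonneg r]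
    · rw [le_div_iff₀ hl0]
      nlinarith [sq_nonneg (1 - 4 * l ^ 2 - r), sq_nonneg (1 - 4 * l ^ 2 + r)]
    · rw [mul_div_assoc', div_sub_one hl0.ne', div_sub_one hl0.ne', div_pow, mul_div_assoc', div_eq_div_iff (by positivity) hl0.ne']
      nlinarith [hr2, hl, sq_nonneg r]
  obtain ⟨h1, h2⟩ := key
  refine ⟨h1, h2, ?_⟩
  have h2s : 0 < 2 * s - 1 := by linarith
  have : s - 1 = (|l| * (2 * s - 1)) ^ 2 := by
    rw [mul_pow, sq_abs]; linarith [h2]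
  rw [this, Real.sqrt_sq (by positivity)]
  field_simp
end
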